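/- Let D = (Σ, A) be a decoder with |Σ| = k. A graph G = (V, E) admits a letter realisation over D if and only if there exists a letter assignment ℓ : V → Σ satisfying conditions (C1), (C2), (C3) and (C4). -/

import Mathlib

open scoped Classical


theorem exists_equiv_of_acyclic {V : Type} [Fintype V] (r : V → V → Prop)
    (htrans : Transitive r) (hirr : Irreflexive r) :
    ∃ c : V ≃ Fin (Fintype.card V), ∀ x y, r x y → c x < c y := by
  classical
  let s : V → V → Prop := fun x y => x = y ∨ r x y
  haveI : IsPartialOrder V s :=
    { refl := fun x => Or.inl rfl
      trans := by
        rintro a b c (rfl | hab) (rfl | hbc)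
        · exact Or.inl rfl
        · exact Or.inr hbc
        · exact Or.inr hab
        · exact Or.inr (htrans hab hbc)
      antisymm := by
        rintro a b (rfl | hab) h
        · rfl
        · rcases h with rfl | hba
          · rfl
          · exact absurd (htrans hab hba) (hirr a) }
  obtain ⟨t, ht, hst⟩ := extend_partialOrder s
  haveI := ht
  letI L : LinearOrder V :=
    { le := t
      le_refl := fun x => refl_of t x
      le_trans := fun a b c => trans_of t
      le_antisymm := fun a b => antisymm_of t
      le_total := fun a b => total_of t a b
      toDecidableLE := fun a b => Classical.dec _ }
  let e : V ≃o Fin (Fintype.card V) := (monoEquivOfFin V rfl).symm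
  refine ⟨e.toEquiv, fun x y hxy => ?_⟩
  have hxy' : x < y := by
    have h1 : t x y := hst x y (Or.inr hxy)
    have h2 : x ≠ y := fun h => hirr x (h ▸ hxy)
    exact lt_of_le_of_ne h1 h2
  exact e.strictMono hxy'

/-- A letter realisation of a graph `G` over a decoder with alphabet `α` and arc
relation `D`: a letter assignment `ℓ` and an ordering `c` (a bijection onto
`Fin (Fintype.card V)`, i.e. onto `[n]`) such that distinct vertices `x, y` are
adjacent iff `(ℓ x, ℓ y) ∈ D` and `c x < c y`, or `(ℓ y, ℓ x) ∈ D` and `c y < c x`. -/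
def IsLetterRealisation {V α : Type} [Fintype V] (G : SimpleGraph V)
    (D : α → α → Prop) (ℓ : V → α) (c : V ≃ Fin (Fintype.card V)) : Prop :=
  ∀ x y : V, x ≠ y →
    (G.Adj x y ↔ (D (ℓ x) (ℓ y) ∧ c x < c y) ∨ (D (ℓ y) (ℓ x) ∧ c y < c x))

/-- The compatibility graph `CG(G, D, ℓ)`: for letters `a, b` with `(a,b) ∈ D` and
`(b,a) ∉ D`, there is an arc `(x, y)` whenever `ℓ x = a`, `ℓ y = b`, `xy ∈ E`, and an
arc `(y, x)` whenever `ℓ x = a`, `ℓ y = b`, `xy ∉ E`. -/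
def CompatArc {V α : Type} (G : SimpleGraph V) (D : α → α → Prop) (ℓ : V → α)
    (u v : V) : Prop :=
  (D (ℓ u) (ℓ v) ∧ ¬ D (ℓ v) (ℓ u) ∧ G.Adj u v) ∨
  (D (ℓ v) (ℓ u) ∧ ¬ D (ℓ u) (ℓ v) ∧ u ≠ v ∧ ¬ G.Adj u v)

/-- Conditions (C1)-(C4) for a letter assignment `ℓ` w.r.t. the decoder `D`:
(C1) each `ℓ⁻¹(a)` with at least two elements is a clique iff `(a,a) ∈ D`;
(C2) each `ℓ⁻¹(a)` with at least two elements is independent iff `(a,a) ∉ D`;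
(C3) if both `(a,b), (b,a) ∈ D` (resp. both `∉ D`), the bipartite graph between
`ℓ⁻¹(a)` and `ℓ⁻¹(b)` is complete (resp. edgeless);
(C4) the compatibility graph is acyclic (no directed circuit). -/
def SatisfiesC {V α : Type} (G : SimpleGraph V) (D : α → α → Prop) (ℓ : V → α) : Prop :=
  (∀ a : α, ({v | ℓ v = a} : Set V).Nontrivial →
    (G.IsClique {v | ℓ v = a} ↔ D a a)) ∧
  (∀ a : α, ({v | ℓ v = a} : Set V).Nontrivial →
    (({v | ℓ v = a} : Set V).Pairwise (fun u v => ¬ G.Adj u v) ↔ ¬ D a a)) ∧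
  (∀ a b : α,
    (D a b → D b a → ∀ u v : V, ℓ u = a → ℓ v = b → u ≠ v → G.Adj u v) ∧
    (¬ D a b → ¬ D b a → ∀ u v : V, ℓ u = a → ℓ v = b → ¬ G.Adj u v)) ∧
  (∀ x : V, ¬ Relation.TransGen (CompatArc G D ℓ) x x)

/-- `G` admits a letter realisation over the decoder `D` (whose
alphabet has `k` letters) iff there is a letter assignment `ℓ` satisfying
(C1)-(C4). -/
theorem stmt_7 {V α : Type} [Fintype V] [Fintype α] (G : SimpleGraph V) (k : ℕ)
    (hk : Fintype.card α = k) (D : α → α → Prop) :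
    (∃ (ℓ : V → α) (c : V ≃ Fin (Fintype.card V)), IsLetterRealisation G D ℓ c) ↔
    (∃ ℓ : V → α, SatisfiesC G D ℓ) := by
  constructor
  · rintro ⟨ℓ, c, hreal⟩
    refine ⟨ℓ, ?_, ?_, ?_, ?_⟩
    · intro a ha
      constructor
      · intro hcl
        obtain ⟨x, hx, y, hy, hxy⟩ := ha
        have := (hreal x y hxy).1 (hcl hx hy hxy)
        rcases this with ⟨h, _⟩ | ⟨h, _⟩ <;> simpa [hx, hy, Set.mem_setOf_eq] using
          (by rw [Set.mem_setOf_eq] at hx hy; rw [hx, hy] at h; exact h)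
      · intro hD x hx y hy hxy
        rw [Set.mem_setOf_eq] at hx hy
        rw [hreal x y hxy, hx, hy]
        rcases lt_or_gt_of_ne (fun h => hxy (c.injective h)) with h | h
        · exact Or.inl ⟨hD, h⟩
        · exact Or.inr ⟨hD, h⟩
    · intro a ha
      constructor
      · intro hpw hD
        obtain ⟨x, hx, y, hy, hxy⟩ := ha
        apply hpw hx hy hxy
        rw [Set.mem_setOf_eq] at hx hy
        rw [hreal x y hxy, hx, hy]
        rcases lt_or_gt_of_ne (fun h => hxy (c.injective h)) with h | h
        · exact Or.inl ⟨hD, h⟩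
        · exact Or.inr ⟨hD, h⟩
      · intro hD x hx y hy hxy hadj
        rw [Set.mem_setOf_eq] at hx hy
        rw [hreal x y hxy, hx, hy] at hadj
        rcases hadj with ⟨h, _⟩ | ⟨h, _⟩ <;> exact hD h
    · intro a b
      constructor
      · intro hab hba u v hu hv huv
        rw [hreal u v huv, hu, hv]
        rcases lt_or_gt_of_ne (fun h => huv (c.injective h)) with h | h
        · exact Or.inl ⟨hab, h⟩
        · exact Or.inr ⟨hba, h⟩
      · intro hab hba u v hu hv hadj
        by_cases huv : u = v
        · exact G.loopless.irrefl v (huv ▸ hadj)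
        rw [hreal u v huv, hu, hv] at hadj
        rcases hadj with ⟨h, _⟩ | ⟨h, _⟩
        · exact hab h
        · exact hba h
    · have key : ∀ u v : V, CompatArc G D ℓ u v → c u < c v := by
        rintro u v (⟨hab, hba, hadj⟩ | ⟨hab, hba, huv, hnadj⟩)
        · have huv := hadj.ne
          rcases (hreal u v huv).1 hadj with ⟨_, h⟩ | ⟨h, _⟩
          · exact h
          · exact absurd h hba
        · rw [hreal u v huv] at hnadj
          push_neg at hnadj
          have h1 := (hnadj.2 hab)
          rcases lt_or_gt_of_ne (fun h => huv (c.injective h)) with h | h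
          · exact h
          · exact absurd h (not_lt.2 h1)
      intro x hx
      have : ∀ y : V, Relation.TransGen (CompatArc G D ℓ) x y → c x < c y := by
        intro y hy
        induction hy with
        | single h => exact key _ _ h
        | tail _ h ih => exact ih.trans (key _ _ h)
      exact lt_irrefl _ (this x hx)
  · rintro ⟨ℓ, _, _, hC3, hC4⟩
    obtain ⟨c, hc⟩ := exists_equiv_of_acyclic (Relation.TransGen (CompatArc G D ℓ))
      (fun _ _ _ h1 h2 => h1.trans h2) hC4
    refine ⟨ℓ, c, fun x y hxy => ?_⟩
    have hne : c x ≠ c y := fun h => hxy (c.injective h)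
    by_cases hab : D (ℓ x) (ℓ y) <;> by_cases hba : D (ℓ y) (ℓ x)
    · have hadj := (hC3 (ℓ x) (ℓ y)).1 hab hba x y rfl rfl hxy
      simp only [hadj, true_iff]
      rcases lt_or_gt_of_ne hne with h | h
      · exact Or.inl ⟨hab, h⟩
      · exact Or.inr ⟨hba, h⟩
    · constructor
      · intro hadj
        exact Or.inl ⟨hab, hc x y (Relation.TransGen.single (Or.inl ⟨hab, hba, hadj⟩))⟩
      · rintro (⟨_, hlt⟩ | ⟨h, _⟩)
        · by_contra hnadj
          have : c y < c x :=
            hc y x (Relation.TransGen.single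
              (Or.inr ⟨hab, hba, Ne.symm hxy, fun h => hnadj h.symm⟩))
          exact absurd hlt (not_lt.2 this.le)
        · exact absurd h hba
    · constructor
      · intro hadj
        exact Or.inr ⟨hba, hc y x (Relation.TransGen.single (Or.inl ⟨hba, hab, hadj.symm⟩))⟩
      · rintro (⟨h, _⟩ | ⟨_, hlt⟩)
        · exact absurd h hab
        · by_contra hnadj
          have : c x < c y :=
            hc x y (Relation.TransGen.single (Or.inr ⟨hba, hab, hxy, hnadj⟩))
          exact absurd hlt (not_lt.2 this.le)
    · have hnadj := (hC3 (ℓ x) (ℓ y)).2 hab hba x y rfl rfl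
      simp only [hnadj, false_iff]
      rintro (⟨h, _⟩ | ⟨h, _⟩)
      · exact hab h
      · exact hba h
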